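/- Let A be an invertible 2×2 real matrix with det A > 0, and let F : ℝ → ℝ be a continuous monotone (increasing) lift of the circle homeomorphism induced by A, i.e. F(t+1) = F(t)+1 and A·e(t)/‖A·e(t)‖ = e(F(t)) for all t ∈ ℝ, where e(t) = (cos(2πt), sin(2πt)). Then the rotation number lim_{n→∞} Fⁿ(0)/n is rational if and only if there exist an integer n ≥ 1, a nonzero vector v ∈ ℝ², and μ ∈ ℝ such that Aⁿ v = μ·v (i.e., some iterate of A has a real eigenvector). -/

import Mathlib

open Filter Topology

/-- The plane `ℝ²` with its Euclidean norm. -/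
abbrev E2 := EuclideanSpace ℝ (Fin 2)

/-- The point `e(t) = (cos(2πt), sin(2πt))` of the unit circle. -/
noncomputable def circleVec (t : ℝ) : E2 :=
  WithLp.toLp 2 ![Real.cos (2 * Real.pi * t), Real.sin (2 * Real.pi * t)]

/-- Action of a real `2×2` matrix on `ℝ²`. -/
noncomputable def matAct (A : Matrix (Fin 2) (Fin 2) ℝ) (v : E2) : E2 :=
  WithLp.toLp 2 (A.mulVec v)

lemma E2.norm_sq (v : E2) : ‖v‖ ^ 2 = v 0 ^ 2 + v 1 ^ 2 := by
  rw [EuclideanSpace.norm_eq, Real.sq_sqrt (by positivity)]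
  simp [Fin.sum_univ_two, sq_abs]

lemma circleVec_norm (t : ℝ) : ‖circleVec t‖ = 1 := by
  have h : ‖circleVec t‖ ^ 2 = 1 := by
    rw [E2.norm_sq]
    show Real.cos _ ^ 2 + Real.sin _ ^ 2 = 1
    exact Real.cos_sq_add_sin_sq _
  nlinarith [norm_nonneg (circleVec t)]

lemma circleVec_ne_zero (t : ℝ) : circleVec t ≠ 0 := by
  intro h
  have := circleVec_norm t
  rw [h, norm_zero] at this
  exact one_ne_zero this.symm

lemma circleVec_add_int (t : ℝ) (k : ℤ) : circleVec (t + k) = circleVec t := by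
  unfold circleVec
  have h1 : 2 * Real.pi * (t + k) = 2 * Real.pi * t + k * (2 * Real.pi) := by ring
  rw [h1, Real.cos_add_int_mul_two_pi, Real.sin_add_int_mul_two_pi]

lemma circleVec_inj {a b : ℝ} (h : circleVec a = circleVec b) : ∃ k : ℤ, a = b + k := by
  have h0 : Real.cos (2*Real.pi*a) = Real.cos (2*Real.pi*b) := congrFun (congrArg WithLp.ofLp h) 0
  have h1 : Real.sin (2*Real.pi*a) = Real.sin (2*Real.pi*b) := congrFun (congrArg WithLp.ofLp h) 1
  have he : Complex.exp ((2*Real.pi*a : ℝ) * Complex.I) = Complex.exp ((2*Real.pi*b : ℝ) * Complex.I) := by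
    rw [Complex.exp_mul_I, Complex.exp_mul_I, ← Complex.ofReal_cos, ← Complex.ofReal_sin,
      ← Complex.ofReal_cos, ← Complex.ofReal_sin, h0, h1]
  rw [Complex.exp_eq_exp_iff_exists_int] at he
  obtain ⟨n, hn⟩ := he
  refine ⟨n, ?_⟩
  have hr := congrArg Complex.im hn
  simp [Complex.add_im, Complex.mul_im] at hr
  have h2π : (2 * Real.pi) ≠ 0 := by positivity
  have h2 : (2*Real.pi) * a = (2*Real.pi) * (b + (n:ℝ)) := by ring_nf; ring_nf at hr; linarith
  exact mul_left_cancel₀ h2π h2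

lemma circleVec_surj (v : E2) (hv : ‖v‖ = 1) : ∃ t : ℝ, circleVec t = v := by
  set z : ℂ := ⟨v 0, v 1⟩ with hz
  have habs : ‖z‖ = 1 := by
    have := E2.norm_sq v
    rw [hv] at this
    rw [Complex.norm_def, Complex.normSq_mk]
    rw [show (1:ℝ) = Real.sqrt 1 from (Real.sqrt_one).symm]
    congr 1
    nlinarith
  have hz0 : z ≠ 0 := by
    intro h; rw [h] at habs; simp at habs
  refine ⟨Complex.arg z / (2 * Real.pi), ?_⟩
  have h2π : (2 * Real.pi) ≠ 0 := by positivity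
  have ht : 2 * Real.pi * (Complex.arg z / (2 * Real.pi)) = Complex.arg z := by
    field_simp
  unfold circleVec
  rw [ht]
  have hc := Complex.cos_arg hz0
  have hs := Complex.sin_arg z
  rw [habs] at hc hs
  simp only [div_one] at hc hs
  rw [hz] at hc hs
  ext i
  fin_cases i <;> simp [hc, hs, hz]
section Main
variable (A : Matrix (Fin 2) (Fin 2) ℝ) (hdet : 0 < A.det)
    (F : ℝ → ℝ) (hFc : Continuous F) (hFm : Monotone F)
    (hFper : ∀ t, F (t + 1) = F t + 1)
    (hFlift : ∀ t, (‖matAct A (circleVec t)‖)⁻¹ • matAct A (circleVec t) =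
      circleVec (F t))

include hdet in
lemma isUnitA : IsUnit A :=
  (Matrix.isUnit_iff_isUnit_det A).2 (isUnit_iff_ne_zero.2 (ne_of_gt hdet))

include hdet in
lemma matAct_ne_zero {v : E2} (hv : v ≠ 0) : matAct A v ≠ 0 := by
  intro h
  apply hv
  have hinj := Matrix.mulVec_injective_iff_isUnit.2 (isUnitA A hdet)
  have : A.mulVec v = A.mulVec 0 := by rw [Matrix.mulVec_zero]; exact congrArg WithLp.ofLp h
  exact (WithLp.ofLp_injective 2) (hinj this)

include hdet hFlift in
lemma step_lift : ∀ t, ∃ c : ℝ, 0 < c ∧ matAct A (circleVec t) = c • circleVec (F t) := by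
  intro t
  have hne : matAct A (circleVec t) ≠ 0 := matAct_ne_zero A hdet (circleVec_ne_zero t)
  have hpos : 0 < ‖matAct A (circleVec t)‖ := norm_pos_iff.2 hne
  refine ⟨‖matAct A (circleVec t)‖, hpos, ?_⟩
  rw [← hFlift t, smul_smul, mul_inv_cancel₀ (ne_of_gt hpos), one_smul]

include hdet hFlift in
lemma iter_lift : ∀ (n : ℕ) (t : ℝ), ∃ c : ℝ, 0 < c ∧
    matAct (A ^ n) (circleVec t) = c • circleVec (F^[n] t) := by
  intro n
  induction n with
  | zero => intro t; exact ⟨1, one_pos, by simp [matAct, Matrix.one_mulVec]⟩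
  | succ n ih =>
    intro t
    obtain ⟨c, hc, hcv⟩ := ih t
    obtain ⟨c', hc', hcv'⟩ := step_lift A hdet F hFlift (F^[n] t)
    refine ⟨c * c', mul_pos hc hc', ?_⟩
    have : matAct (A ^ (n+1)) (circleVec t) = matAct A (matAct (A ^ n) (circleVec t)) := by
      simp only [matAct, WithLp.ofLp_toLp, Matrix.mulVec_mulVec, pow_succ']
    rw [this, hcv]
    show WithLp.toLp 2 (A.mulVec (c • circleVec (F^[n] t)).ofLp) = _
    rw [WithLp.ofLp_smul, Matrix.mulVec_smul, WithLp.toLp_smul]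
    show c • matAct A (circleVec (F^[n] t)) = _
    rw [hcv', smul_smul, Function.iterate_succ_apply']

/-- `F` as a `CircleDeg1Lift`. -/
noncomputable def liftF : CircleDeg1Lift := ⟨⟨F, hFm⟩, hFper⟩

end Main

lemma coe_liftF (F : ℝ → ℝ) (hFm : Monotone F) (hFper : ∀ t, F (t + 1) = F t + 1) :
    ⇑(liftF F hFm hFper) = F := rfl

theorem main_aux
    (A : Matrix (Fin 2) (Fin 2) ℝ) (hdet : 0 < A.det)
    (F : ℝ → ℝ) (hFc : Continuous F) (hFm : Monotone F)
    (hFper : ∀ t, F (t + 1) = F t + 1)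
    (hFlift : ∀ t, (‖matAct A (circleVec t)‖)⁻¹ • matAct A (circleVec t) =
      circleVec (F t)) :
    (∃ q : ℚ, Tendsto (fun n : ℕ => F^[n] 0 / n) atTop (𝓝 (q : ℝ))) ↔
      (∃ n : ℕ, 1 ≤ n ∧ ∃ v : E2, v ≠ 0 ∧ ∃ μ : ℝ, matAct (A ^ n) v = μ • v) := by
  set g : CircleDeg1Lift := liftF F hFm hFper with hg
  have hgc : Continuous ⇑g := hFc
  have hgiter : ∀ n : ℕ, ⇑(g ^ n) = F^[n] := fun n => CircleDeg1Lift.coe_pow g n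
  constructor
  · rintro ⟨q, hq⟩
    have hτ : g.translationNumber = (q : ℝ) := by
      apply g.translationNumber_eq_of_tendsto₀
      exact hq
    have hden : 0 < q.den := q.pos
    have hτq : g.translationNumber = (q.num : ℝ) / (q.den : ℝ) := by
      rw [hτ, Rat.cast_def]
    obtain ⟨x, hx⟩ := (g.translationNumber_eq_rat_iff hgc hden).1 hτq
    rw [hgiter q.den] at hx
    obtain ⟨c, hc, hcv⟩ := iter_lift A hdet F hFlift q.den x
    refine ⟨q.den, hden, circleVec x, circleVec_ne_zero x, c, ?_⟩
    rw [hcv, hx, circleVec_add_int]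
  · rintro ⟨n, hn, v, hv, μ, hμ⟩
    have hunit : IsUnit (A ^ n) := (isUnitA A hdet).pow n
    have hμ0 : μ ≠ 0 := by
      rintro rfl
      apply hv
      have hinj := Matrix.mulVec_injective_iff_isUnit.2 hunit
      have : (A ^ n).mulVec v = (A ^ n).mulVec 0 := by
        rw [Matrix.mulVec_zero]
        exact congrArg WithLp.ofLp (hμ.trans (zero_smul ℝ v))
      exact (WithLp.ofLp_injective 2) (hinj this)
    set u : E2 := ‖v‖⁻¹ • v with hu
    have hun : ‖u‖ = 1 := norm_smul_inv_norm hv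
    have hAu : matAct (A ^ n) u = μ • u := by
      show WithLp.toLp 2 ((A ^ n).mulVec (‖v‖⁻¹ • v).ofLp) = μ • u
      rw [WithLp.ofLp_smul, Matrix.mulVec_smul, WithLp.toLp_smul]
      show ‖v‖⁻¹ • matAct (A ^ n) v = _
      rw [hμ, hu, smul_smul, smul_smul, mul_comm]
    have hA2u : matAct (A ^ (2 * n)) u = (μ * μ) • u := by
      show WithLp.toLp 2 ((A ^ (2 * n)).mulVec u) = _
      rw [two_mul, pow_add, ← Matrix.mulVec_mulVec]
      show WithLp.toLp 2 ((A ^ n).mulVec (matAct (A ^ n) u)) = _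
      rw [hAu, WithLp.ofLp_smul, Matrix.mulVec_smul, WithLp.toLp_smul]
      show μ • matAct (A ^ n) u = _
      rw [hAu, smul_smul]
    obtain ⟨t, ht⟩ := circleVec_surj u hun
    obtain ⟨c, hc, hcv⟩ := iter_lift A hdet F hFlift (2 * n) t
    rw [ht, hA2u] at hcv
    have hμ2 : 0 < μ * μ := mul_self_pos.2 hμ0
    have hceq : c = μ * μ := by
      have h1 : ‖(μ * μ) • u‖ = μ * μ := by
        rw [norm_smul, hun, mul_one, Real.norm_eq_abs, abs_of_pos hμ2]
      have h2 : ‖c • circleVec (F^[2 * n] t)‖ = c := by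
        rw [norm_smul, circleVec_norm, mul_one, Real.norm_eq_abs, abs_of_pos hc]
      rw [hcv, h2] at h1
      exact h1
    have hcirc : circleVec t = circleVec (F^[2 * n] t) := by
      rw [ht]
      apply smul_right_injective E2 (ne_of_gt hc)
      show c • u = c • circleVec (F^[2 * n] t)
      rw [← hceq] at hcv
      exact hcv
    obtain ⟨k, hk⟩ := circleVec_inj hcirc.symm
    have hgk : (g ^ (2 * n)) t = t + k := by rw [hgiter]; exact hk
    have hτk : (g ^ (2 * n)).translationNumber = (k : ℝ) :=
      CircleDeg1Lift.translationNumber_of_eq_add_int _ hgk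
    rw [CircleDeg1Lift.translationNumber_pow] at hτk
    have h2n : (0:ℝ) < (2 * n : ℕ) := by
      have : 0 < 2 * n := by omega
      exact_mod_cast this
    have hτval : g.translationNumber = (k : ℝ) / ((2 * n : ℕ) : ℝ) := by
      rw [eq_div_iff (ne_of_gt h2n), mul_comm]
      exact hτk
    refine ⟨(k : ℚ) / ((2 * n : ℕ) : ℚ), ?_⟩
    have hcast : (((k : ℚ) / ((2 * n : ℕ) : ℚ) : ℚ) : ℝ) = (k : ℝ) / ((2 * n : ℕ) : ℝ) := by
      push_cast
      ring
    rw [hcast, ← hτval]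
    have := g.tendsto_translation_number₀
    simpa [hgiter] using this

/-- For an invertible `2×2` real matrix `A` with positive determinant, the
rotation number of the induced circle homeomorphism is rational if and only if
some iterate of `A` has a real eigenvector. -/
theorem linear_rotation_number_rational_iff_real_eigenvector
    (A : Matrix (Fin 2) (Fin 2) ℝ) (hdet : 0 < A.det)
    (F : ℝ → ℝ) (hFc : Continuous F) (hFm : Monotone F)
    (hFper : ∀ t, F (t + 1) = F t + 1)
    (hFlift : ∀ t, (‖matAct A (circleVec t)‖)⁻¹ • matAct A (circleVec t) =
      circleVec (F t)) :
    (∃ q : ℚ, Tendsto (fun n : ℕ => F^[n] 0 / n) atTop (𝓝 (q : ℝ))) ↔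
      (∃ n : ℕ, 1 ≤ n ∧ ∃ v : E2, v ≠ 0 ∧ ∃ μ : ℝ, matAct (A ^ n) v = μ • v) :=
  main_aux A hdet F hFc hFm hFper hFlift
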